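/- arXiv:1412.2868 — 4 statements merged into one kernel-verified Lean document; each statement's English description precedes it below -/
import Mathlib

section
/- If a group A is the union of three proper subgroups A₁, A₂, A₃, then each Aᵢ has index 2 in A. -/
private lemma exists_not_mem {A : Type*} [Group A] (H : Subgroup A) (h : H ≠ ⊤) :
    ∃ u, u ∉ H := by
  by_contra hh; push_neg at hh; exact h ((Subgroup.eq_top_iff' H).2 hh)

private lemma no_two_cover {A : Type*} [Group A] (H K : Subgroup A)
    (hH : H ≠ ⊤) (hK : K ≠ ⊤) (hc : ∀ g : A, g ∈ H ∨ g ∈ K) : False := by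
  obtain ⟨u, hu⟩ := exists_not_mem H hH
  obtain ⟨v, hv⟩ := exists_not_mem K hK
  have huK : u ∈ K := (hc u).resolve_left hu
  have hvH : v ∈ H := (hc v).resolve_right hv
  rcases hc (u * v) with h | h
  · exact hu (by simpa using mul_mem h (inv_mem hvH))
  · exact hv (by simpa using mul_mem (inv_mem huK) h)

private lemma exists_only {A : Type*} [Group A] (H₁ H₂ H₃ : Subgroup A)
    (h2 : H₂ ≠ ⊤) (h3 : H₃ ≠ ⊤)
    (hc : ∀ g : A, g ∈ H₁ ∨ g ∈ H₂ ∨ g ∈ H₃) :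
    ∃ a, a ∈ H₁ ∧ a ∉ H₂ ∧ a ∉ H₃ := by
  by_contra h
  push_neg at h
  refine no_two_cover H₂ H₃ h2 h3 fun g => ?_
  rcases hc g with hg | hg | hg
  · rcases Classical.em (g ∈ H₂) with h' | h'
    · exact Or.inl h'
    · exact Or.inr (h g hg h')
  · exact Or.inl hg
  · exact Or.inr hg

private lemma key {A : Type*} [Group A] (H₁ H₂ H₃ : Subgroup A)
    (h1 : H₁ ≠ ⊤) (h2 : H₂ ≠ ⊤) (h3 : H₃ ≠ ⊤)
    (hc : ∀ g : A, g ∈ H₁ ∨ g ∈ H₂ ∨ g ∈ H₃) :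
    ∀ x y : A, x ∉ H₁ → y ∉ H₁ → x⁻¹ * y ∈ H₁ := by
  obtain ⟨a, ha1, ha2, ha3⟩ := exists_only H₁ H₂ H₃ h2 h3 hc
  -- H₂ ∩ H₃ ⊆ H₁
  have i23 : ∀ x : A, x ∈ H₂ → x ∈ H₃ → x ∈ H₁ := by
    intro x hx2 hx3
    have hxa : x * a ∈ H₁ := by
      rcases hc (x * a) with h | h | h
      · exact h
      · exact absurd (by simpa using mul_mem (inv_mem hx2) h) ha2
      · exact absurd (by simpa using mul_mem (inv_mem hx3) h) ha3
    simpa [mul_assoc] using mul_mem hxa (inv_mem ha1)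
  have main2 : ∀ x : A, x ∈ H₂ → x ∉ H₁ → a * x ∈ H₃ := by
    intro x hx2 hx1
    rcases hc (a * x) with h | h | h
    · exact absurd (by simpa using mul_mem (inv_mem ha1) h) hx1
    · exact absurd (by simpa [mul_assoc] using mul_mem h (inv_mem hx2)) ha2
    · exact h
  have main3 : ∀ x : A, x ∈ H₃ → x ∉ H₁ → a * x ∈ H₂ := by
    intro x hx3 hx1
    rcases hc (a * x) with h | h | h
    · exact absurd (by simpa using mul_mem (inv_mem ha1) h) hx1
    · exact h
    · exact absurd (by simpa [mul_assoc] using mul_mem h (inv_mem hx3)) ha3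
  have mixed : ∀ x y : A, x ∈ H₂ → x ∉ H₁ → y ∈ H₃ → y ∉ H₁ → x⁻¹ * y ∈ H₁ := by
    intro x y hx2 hx hy3 hy
    have hx3 : x ∉ H₃ := fun h => hx (i23 x hx2 h)
    have hy2 : y ∉ H₂ := fun h => hy (i23 y h hy3)
    rcases hc (x⁻¹ * y) with h | h | h
    · exact h
    · exact absurd (by simpa [mul_assoc] using mul_mem hx2 h) hy2
    · exact absurd (by simpa [mul_assoc] using mul_mem h (inv_mem hy3)) (by simpa using hx3)
  intro x y hx hy
  have hx' := (hc x).resolve_left hx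
  have hy' := (hc y).resolve_left hy
  rcases hx' with hx2 | hx3 <;> rcases hy' with hy2 | hy3
  · have h1' := main2 x hx2 hx
    have h2' := main2 y hy2 hy
    have h3' : x⁻¹ * y ∈ H₃ := by
      simpa [mul_assoc] using mul_mem (inv_mem h1') h2'
    exact i23 _ (mul_mem (inv_mem hx2) hy2) h3'
  · exact mixed x y hx2 hx hy3 hy
  · have := mixed y x hy2 hy hx3 hx
    simpa using inv_mem this
  · have h1' := main3 x hx3 hx
    have h2' := main3 y hy3 hy
    have h3' : x⁻¹ * y ∈ H₂ := by
      simpa [mul_assoc] using mul_mem (inv_mem h1') h2'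
    exact i23 _ h3' (mul_mem (inv_mem hx3) hy3)

private lemma index_two {A : Type*} [Group A] (H₁ H₂ H₃ : Subgroup A)
    (h1 : H₁ ≠ ⊤) (h2 : H₂ ≠ ⊤) (h3 : H₃ ≠ ⊤)
    (hc : ∀ g : A, g ∈ H₁ ∨ g ∈ H₂ ∨ g ∈ H₃) : H₁.index = 2 := by
  have k := key H₁ H₂ H₃ h1 h2 h3 hc
  obtain ⟨c, hc1⟩ := exists_not_mem H₁ h1
  rw [Subgroup.index_eq_two_iff]
  refine ⟨c, fun g => ?_⟩
  rcases Classical.em (g ∈ H₁) with hg | hg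
  · refine Or.inr ⟨hg, fun h => hc1 ?_⟩
    simpa using mul_mem (inv_mem hg) h
  · refine Or.inl ⟨?_, hg⟩
    have := k g⁻¹ c (fun h => hg (by simpa using inv_mem h)) hc1
    simpa using this

theorem stmt_1 {A : Type*} [Group A] (A₁ A₂ A₃ : Subgroup A)
    (h1 : A₁ ≠ ⊤) (h2 : A₂ ≠ ⊤) (h3 : A₃ ≠ ⊤)
    (hcover : (A₁ : Set A) ∪ (A₂ : Set A) ∪ (A₃ : Set A) = Set.univ) :
    A₁.index = 2 ∧ A₂.index = 2 ∧ A₃.index = 2 := by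
  have hc : ∀ g : A, g ∈ A₁ ∨ g ∈ A₂ ∨ g ∈ A₃ := by
    intro g
    have : g ∈ (A₁ : Set A) ∪ (A₂ : Set A) ∪ (A₃ : Set A) := hcover ▸ Set.mem_univ g
    simpa [or_assoc] using this
  exact ⟨index_two A₁ A₂ A₃ h1 h2 h3 hc,
    index_two A₂ A₁ A₃ h2 h1 h3 (fun g => by rcases hc g with h|h|h <;> tauto),
    index_two A₃ A₁ A₂ h3 h1 h2 (fun g => by rcases hc g with h|h|h <;> tauto)⟩
end

section
/- Let O be an integrally closed domain with fraction field K and r integral over O with [K(r) : K] = 2. If q is integral over O with O[q] = O[r], and q = a₀ + a₁ r with a₀, a₁ ∈ O, then a₁ is a unit of O. -/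
theorem stmt_9 (O : Type*) [CommRing O] [IsDomain O] [CharZero O] [IsIntegrallyClosed O]
    (K : Type*) [Field K] [Algebra O K] [IsFractionRing O K]
    (Ω : Type*) [Field Ω] [IsAlgClosed Ω] [Algebra K Ω] [Algebra O Ω] [IsScalarTower O K Ω]
    (r : Ω) (hr : IsIntegral O r)
    (hdeg : Module.finrank K (IntermediateField.adjoin K {r}) = 2)
    (q : Ω) (hq : IsIntegral O q)
    (hadj : Algebra.adjoin O {q} = Algebra.adjoin O {r})
    (a₀ a₁ : O) (hcoord : q = algebraMap O Ω a₀ + algebraMap O Ω a₁ * r) :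
    IsUnit a₁ := by
  set f : O →+* Ω := algebraMap O Ω with hf
  have hfinj : Function.Injective f := by
    rw [hf, IsScalarTower.algebraMap_eq O K Ω]
    exact (algebraMap K Ω).injective.comp (IsFractionRing.injective O K)
  have hKr : IsIntegral K r := hr.tower_top
  have hmin : minpoly K r = (minpoly O r).map (algebraMap O K) :=
    minpoly.isIntegrallyClosed_eq_field_fractions K Ω hr
  have hp2 : (minpoly O r).natDegree = 2 := by
    have h1 := IntermediateField.adjoin.finrank hKr
    rw [hdeg] at h1
    rw [hmin, Polynomial.natDegree_map_eq_of_injective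
      (IsFractionRing.injective O K)] at h1
    exact h1.symm
  -- relation r^2 = f c₀ + f c₁ * r
  obtain ⟨c₀, c₁, hr2⟩ : ∃ c₀ c₁ : O, r ^ 2 = f c₀ + f c₁ * r := by
    have h0 := minpoly.aeval O r
    rw [Polynomial.aeval_eq_sum_range, hp2] at h0
    simp only [Finset.sum_range_succ, Finset.sum_range_zero, zero_add, pow_zero, pow_one,
      Algebra.smul_def] at h0
    have hc2 : (minpoly O r).coeff 2 = 1 := by
      have := (minpoly.monic hr).coeff_natDegree
      rwa [hp2] at this
    rw [hc2, map_one, one_mul] at h0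
    exact ⟨-(minpoly O r).coeff 0, -(minpoly O r).coeff 1, by
      simp only [map_neg]; linear_combination h0⟩
  -- the subalgebra O + O·a₁·r
  let S : Subalgebra O Ω :=
  { carrier := {x | ∃ b₀ b₁ : O, x = f b₀ + f (a₁ * b₁) * r}
    mul_mem' := by
      rintro x y ⟨b₀, b₁, rfl⟩ ⟨d₀, d₁, rfl⟩
      exact ⟨b₀ * d₀ + a₁ * b₁ * (a₁ * d₁) * c₀, b₀ * d₁ + b₁ * d₀ + b₁ * (a₁ * d₁) * c₁, by
        simp only [map_add, map_mul]
        linear_combination (f a₁ * f b₁ * (f a₁ * f d₁)) * hr2⟩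
    add_mem' := by
      rintro x y ⟨b₀, b₁, rfl⟩ ⟨d₀, d₁, rfl⟩
      exact ⟨b₀ + d₀, b₁ + d₁, by simp only [map_add, map_mul]; ring⟩
    algebraMap_mem' := fun a => ⟨a, 0, by simp [hf]⟩ }
  have hqS : q ∈ S := ⟨a₀, 1, by rw [hcoord, mul_one]⟩
  have hrq : r ∈ Algebra.adjoin O {q} := by
    rw [hadj]; exact Algebra.subset_adjoin rfl
  have hrS : r ∈ S := Algebra.adjoin_le (by simpa using hqS) hrq
  obtain ⟨b₀, b₁, hb⟩ := hrS
  -- claim a₁ * b₁ = 1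
  have key : a₁ * b₁ = 1 := by
    by_contra hne
    have hc : (1 : O) - a₁ * b₁ ≠ 0 := sub_ne_zero.mpr (Ne.symm hne)
    have heq : f (1 - a₁ * b₁) * r = f b₀ := by
      simp only [map_sub, map_one]
      linear_combination hb
    have hcΩ : f (1 - a₁ * b₁) ≠ 0 := fun h => hc (hfinj (by rw [h, map_zero]))
    have hrK : r = algebraMap K Ω (algebraMap O K b₀ / algebraMap O K (1 - a₁ * b₁)) := by
      rw [map_div₀, ← IsScalarTower.algebraMap_apply, ← IsScalarTower.algebraMap_apply, ← hf]
      rw [eq_div_iff hcΩ, mul_comm]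
      exact heq
    have hbot : IntermediateField.adjoin K {r} = ⊥ :=
      IntermediateField.adjoin_simple_eq_bot_iff.mpr
        (IntermediateField.mem_bot.mpr ⟨_, hrK.symm⟩)
    rw [hbot, IntermediateField.finrank_bot] at hdeg
    norm_num at hdeg
  exact IsUnit.of_mul_eq_one b₁ key
end

section
/- Let L/K be a finite Galois extension with only s roots of unity in L*, and let q ∈ L with q ∉ K. Define Q to be the smallest positive integer such that K(q^Q) ⊆ K(q^n) for every positive integer n; then Q ≤ s. -/
theorem stmt_11 (K L : Type*) [Field K] [CharZero K] [Field L] [Algebra K L]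
    [FiniteDimensional K L] [IsGalois K L]
    (s : ℕ) (hfin : {x : L | ∃ n : ℕ, 0 < n ∧ x ^ n = 1}.Finite)
    (hcard : {x : L | ∃ n : ℕ, 0 < n ∧ x ^ n = 1}.ncard = s)
    (q : L) (hq : q ∉ Set.range (algebraMap K L))
    (Q : ℕ) (hQ : 0 < Q)
    (hsub : ∀ n : ℕ, 0 < n →
      IntermediateField.adjoin K {q ^ Q} ≤ IntermediateField.adjoin K {q ^ n})
    (hleast : ∀ Q' : ℕ, 0 < Q' →
      (∀ n : ℕ, 0 < n →
        IntermediateField.adjoin K {q ^ Q'} ≤ IntermediateField.adjoin K {q ^ n}) →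
      Q ≤ Q') :
    Q ≤ s := by
  classical
  set S : Set L := {x : L | ∃ n : ℕ, 0 < n ∧ x ^ n = 1} with hS
  -- q ≠ 0
  have hq0 : q ≠ 0 := by
    rintro rfl
    exact hq ⟨0, by simp⟩
  -- identify S with the torsion subgroup of Lˣ
  set G : Subgroup Lˣ := CommGroup.torsion Lˣ with hG
  have key : ∀ (u : Lˣ), u ∈ G → ((u : L) : L) ∈ S := by
    rintro u hu
    obtain ⟨n, hn, hpow⟩ := (isOfFinOrder_iff_pow_eq_one.mp hu)
    exact ⟨n, hn, by rw [← Units.val_pow_eq_pow_val, hpow, Units.val_one]⟩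
  -- the map G → S
  have hGfin : (Set.univ : Set G).Finite := by
    have : Set.Finite ((fun u : G => ((u : Lˣ) : L)) '' Set.univ) :=
      hfin.subset (by rintro x ⟨u, -, rfl⟩; exact key u u.2)
    exact this.of_finite_image (by
      rintro u - v - h
      exact Subtype.ext (Units.ext h))
  have : Finite G := Set.finite_univ_iff.mp hGfin
  -- bijection between G and S
  have hbij : Set.BijOn (fun u : G => ((u : Lˣ) : L)) Set.univ S := by
    refine ⟨fun u _ => key u u.2, ?_, ?_⟩
    · rintro u - v - h
      exact Subtype.ext (Units.ext h)
    · rintro x ⟨n, hn, hx⟩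
      have hxu : IsUnit x := by
        refine IsUnit.of_mul_eq_one (a := x) (x ^ (n - 1)) ?_
        rw [← pow_succ', Nat.sub_add_cancel hn]
        exact hx
      refine ⟨⟨hxu.unit, ?_⟩, trivial, hxu.unit_spec⟩
      rw [hG, CommGroup.mem_torsion, isOfFinOrder_iff_pow_eq_one]
      exact ⟨n, hn, Units.ext (by simp [hxu.unit_spec, hx])⟩
  have hcardG : Nat.card G = s := by
    rw [← hcard, ← hbij.image_eq, Set.ncard_image_of_injOn hbij.injOn, Set.ncard_univ]
  -- every root of unity ζ in L satisfies ζ ^ s = 1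
  have hzeta : ∀ ζ : L, ζ ∈ S → ζ ^ s = 1 := by
    intro ζ hζ
    obtain ⟨u, -, hu⟩ := hbij.surjOn hζ
    have : (u : G) ^ s = 1 := by rw [← hcardG]; exact pow_card_eq_one'
    have h3 : (u : Lˣ) ^ s = 1 := by exact_mod_cast congrArg Subtype.val this
    have h2 : ((u : Lˣ) : L) ^ s = 1 := by
      rw [← Units.val_pow_eq_pow_val, h3, Units.val_one]
    rw [← hu]; exact h2
  -- s is positive
  have hs : 0 < s := by
    rcases Nat.eq_zero_or_pos s with h | h
    · exfalso
      have h1 : (1 : L) ∈ S := ⟨1, one_pos, one_pow 1⟩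
      have : 0 < S.ncard := (Set.ncard_pos hfin).mpr ⟨1, h1⟩
      omega
    · exact h
  -- apply minimality with Q' = s
  apply hleast s hs
  intro n hn
  rw [IntermediateField.adjoin_le_iff, Set.singleton_subset_iff]
  set F := IntermediateField.adjoin K {q ^ n} with hF
  have hqn : q ^ n ∈ F := IntermediateField.subset_adjoin K _ rfl
  rw [show (F : Set L) = ((F : IntermediateField K L) : Set L) from rfl]
  rw [← IsGalois.fixedField_fixingSubgroup F]
  -- membership in the fixed field
  intro σ
  have hσ : σ.1 (q ^ n) = q ^ n := σ.2 ⟨q ^ n, hqn⟩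
  -- σ q / q is a root of unity
  have hζS : (σ.1 q / q) ∈ S := by
    refine ⟨n, hn, ?_⟩
    rw [div_pow, ← map_pow, hσ, div_self (pow_ne_zero n hq0)]
  have hζs := hzeta _ hζS
  have : σ.1 q ^ s = q ^ s := by
    have h1 : (σ.1 q / q) ^ s = 1 := hζs
    field_simp at h1
    rw [div_pow] at h1
    exact ((div_eq_iff (pow_ne_zero s hq0)).mp h1).trans (one_mul _)
  show σ.1 (q ^ s) = q ^ s
  rw [map_pow]; exact this
end

section
/- Let E be a field of characteristic zero and r algebraic over E of degree d' ≥ 2 with distinct E-embeddings η₀ = id, η₁, ..., η_{d'-1} into an algebraic closure. The (d'-1)×(d'-1) matrix C whose (i,j)-entry is r^j - ηᵢ(r^j) (for 1 ≤ i, j ≤ d'-1) is invertible. -/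
def finEquivNZ (n : ℕ) : Fin n ≃ {i : Fin (n+1) // (i : ℕ) ≠ 0} where
  toFun i := ⟨i.succ, by simp⟩
  invFun s := s.1.pred (mt (congrArg Fin.val) s.2)
  left_inv i := Fin.pred_succ i
  right_inv s := Subtype.ext (Fin.succ_pred s.1 (mt (congrArg Fin.val) s.2))

theorem stmt_14 (E : Type*) [Field E] [CharZero E]
    (Ω : Type*) [Field Ω] [Algebra E Ω] [IsAlgClosed Ω]
    (r : Ω) (hr : IsIntegral E r) (d : ℕ) (hd : 2 ≤ d)
    (hdeg : Module.finrank E (IntermediateField.adjoin E {r}) = d)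
    (η : Fin d → ((IntermediateField.adjoin E {r}) →ₐ[E] Ω))
    (hinj : Function.Injective η)
    (h0 : η ⟨0, by omega⟩ = (IntermediateField.adjoin E {r}).val) :
    IsUnit (Matrix.det (Matrix.of (fun (i j : {i : Fin d // (i : ℕ) ≠ 0}) =>
      r ^ (j.1 : ℕ) - η i.1 (IntermediateField.AdjoinSimple.gen E r ^ (j.1 : ℕ))))) := by
  obtain ⟨n, rfl⟩ : ∃ n, d = n + 1 := ⟨d - 1, by omega⟩
  set g : (IntermediateField.adjoin E {r}) := IntermediateField.AdjoinSimple.gen E r with hg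
  set v : Fin (n+1) → Ω := fun i => η i g with hv
  have hvinj : Function.Injective v := by
    intro i j hij
    apply hinj
    exact (IntermediateField.adjoin.powerBasis hr).algHom_ext hij
  have h00 : (⟨0, by omega⟩ : Fin (n+1)) = 0 := rfl
  have hv0 : v 0 = r := by
    rw [hv]
    simp only [← h00, h0]
    rfl
  set M : Matrix (Fin (n+1)) (Fin (n+1)) Ω := Matrix.vandermonde v with hM
  have hMdet : M.det ≠ 0 := Matrix.det_vandermonde_ne_zero_iff.mpr hvinj
  set N : Matrix (Fin (n+1)) (Fin (n+1)) Ω :=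
    Matrix.of (fun i j => M i j - (if i = 0 then 0 else 1) * M 0 j) with hN
  have hNdet : N.det = M.det := by
    apply Matrix.det_eq_of_forall_row_eq_smul_add_const
      (fun i => if i = 0 then 0 else -1) 0 (by simp)
    intro i j
    by_cases h : i = 0 <;> simp [hN, h] <;> ring
  have hN0 : ∀ i : Fin (n+1), i ≠ 0 → N i 0 = 0 := by
    intro i hi
    simp [hN, hM, Matrix.vandermonde, hi]
  have hexp : N.det = (N.submatrix Fin.succ Fin.succ).det := by
    rw [Matrix.det_succ_column_zero]
    rw [Finset.sum_eq_single 0]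
    · simp [hN, hM, Matrix.vandermonde]
    · intro i _ hi
      rw [hN0 i hi]; ring
    · simp
  -- the target matrix
  set C : Matrix {i : Fin (n+1) // (i : ℕ) ≠ 0} {i : Fin (n+1) // (i : ℕ) ≠ 0} Ω :=
    Matrix.of (fun i j => r ^ (j.1 : ℕ) - η i.1 (g ^ (j.1 : ℕ))) with hC
  set e : Fin n ≃ {i : Fin (n+1) // (i : ℕ) ≠ 0} := finEquivNZ n with he
  have hsub : C.submatrix e e = - (N.submatrix Fin.succ Fin.succ) := by
    ext i j
    have : η (Fin.succ i) (g ^ ((Fin.succ j : Fin (n+1)) : ℕ)) = v i.succ ^ ((j : ℕ) + 1) := by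
      rw [map_pow]; rfl
    simp [hC, hN, hM, Matrix.vandermonde, he, finEquivNZ, this, hv0, Fin.succ_ne_zero] <;> rfl
  have hCdet : C.det ≠ 0 := by
    rw [← Matrix.det_submatrix_equiv_self e C, hsub, Matrix.det_neg]
    simp only [Fintype.card_fin]
    rw [← hexp, hNdet]
    intro h
    rcases mul_eq_zero.mp h with h' | h'
    · exact (pow_ne_zero n (by norm_num : (-1 : Ω) ≠ 0)) h'
    · exact hMdet h'
  exact isUnit_iff_ne_zero.mpr hCdet
end
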